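/- Let V be a real inner product space with orthogonal complex structure J, and R a curvature-type tensor. Let {x,y} be an orthonormal antiholomorphic pair and suppose both: (i) H(x) = H(y), and (ii) 2H(x) = K(x,Jy) + 2R(x,Jx,Jy,y) + 2R(x,Jy,Jx,y) + K(Jx,y), where H(X)=R(X,JX,JX,X), K(X,Y)=R(X,Y,Y,X). If these identities hold for all orthonormal antiholomorphic pairs obtained from {x,y} by rotation {(x+ty)/√(1+t²), (tx−y)/√(1+t²)} (all t ∈ ℝ), then R(x,Jx,Jx,y) + R(x,Jx,Jy,x) = 0. -/

import Mathlib

set_option maxHeartbeats 2000000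


open scoped RealInnerProductSpace

/-- The `m = 2` case in Theorem 5: if the identities `H(u) = H(v)` and
`2H(u) = K(u,Jv) + 2R(u,Ju,Jv,v) + 2R(u,Jv,Ju,v) + K(Ju,v)` hold for all
rotated pairs `u = (x+ty)/√(1+t²)`, `v = (tx−y)/√(1+t²)` of an orthonormal
antiholomorphic pair `{x,y}`, then `R(x,Jx,Jx,y) + R(x,Jx,Jy,x) = 0`. -/
theorem rotated_pairs_identities_imp_vanish
    {V : Type*} [NormedAddCommGroup V] [InnerProductSpace ℝ V]
    (J : V →ₗ[ℝ] V) (hJ2 : ∀ X : V, J (J X) = -X)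
    (hJg : ∀ X Y : V, ⟪J X, J Y⟫ = ⟪X, Y⟫)
    (R : V →ₗ[ℝ] V →ₗ[ℝ] V →ₗ[ℝ] V →ₗ[ℝ] ℝ)
    (hR1 : ∀ X Y Z W : V, R X Y Z W = - R Y X Z W)
    (hR2 : ∀ X Y Z W : V, R X Y Z W = - R X Y W Z)
    (hR3 : ∀ X Y Z W : V, R X Y Z W = R Z W X Y)
    (hB : ∀ X Y Z W : V, R X Y Z W + R Y Z X W + R Z X Y W = 0)
    (x y : V) (hx : ‖x‖ = 1) (hy : ‖y‖ = 1) (hxy : ⟪x, y⟫ = 0) (hxJy : ⟪x, J y⟫ = 0)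
    (h1 : ∀ t : ℝ,
      ∀ u v : V, u = (Real.sqrt (1 + t ^ 2))⁻¹ • (x + t • y) →
        v = (Real.sqrt (1 + t ^ 2))⁻¹ • (t • x - y) →
        R u (J u) (J u) u = R v (J v) (J v) v ∧
        2 * R u (J u) (J u) u =
          R u (J v) (J v) u + 2 * R u (J u) (J v) v + 2 * R u (J v) (J u) v +
            R (J u) v v (J u)) :
    R x (J x) (J x) y + R x (J x) (J y) x = 0 := by
  have sym : ∀ p q r s : V, R p q r s = R s r q p := fun p q r s => by
    linear_combination hR3 p q r s + hR1 r s p q - hR2 s r p q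
  have hsc : ∀ (d : ℝ) (p q r s : V),
      R (d • p) (d • q) (d • r) (d • s) = d ^ 4 * R p q r s := by
    intro d p q r s
    simp only [map_smul, LinearMap.smul_apply, smul_eq_mul]
    ring
  have key : ∀ t : ℝ,
      R (x + t • y) (J x + t • J y) (J x + t • J y) (x + t • y)
        = R (t • x - y) (t • J x - J y) (t • J x - J y) (t • x - y) ∧
      2 * R (x + t • y) (J x + t • J y) (J x + t • J y) (x + t • y)
        = R (x + t • y) (t • J x - J y) (t • J x - J y) (x + t • y)
          + 2 * R (x + t • y) (J x + t • J y) (t • J x - J y) (t • x - y)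
          + 2 * R (x + t • y) (t • J x - J y) (J x + t • J y) (t • x - y)
          + R (t • x - y) (J x + t • J y) (J x + t • J y) (t • x - y) := by
    intro t
    have hs : Real.sqrt (1 + t ^ 2) ≠ 0 := by positivity
    set c := (Real.sqrt (1 + t ^ 2))⁻¹ with hc
    have hc4 : c ^ 4 ≠ 0 := pow_ne_zero 4 (inv_ne_zero hs)
    obtain ⟨hA, hB'⟩ := h1 t _ _ rfl rfl
    have hJu : J (c • (x + t • y)) = c • (J x + t • J y) := by
      simp [map_smul, map_add]
    have hJv : J (c • (t • x - y)) = c • (t • J x - J y) := by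
      simp [map_smul, map_sub]
    rw [hJu, hJv] at hA hB'
    rw [hsc, hsc] at hA
    rw [hsc, hsc, hsc, hsc, hsc] at hB'
    refine ⟨mul_left_cancel₀ hc4 hA, mul_left_cancel₀ hc4 ?_⟩
    have hQ : R (J x + t • J y) (t • x - y) (t • x - y) (J x + t • J y)
        = R (t • x - y) (J x + t • J y) (J x + t • J y) (t • x - y) :=
      hR3 _ _ _ _
    linear_combination hB' + c ^ 4 * hQ
  obtain ⟨e0a, e0b⟩ := key 0
  obtain ⟨e1a, e1b⟩ := key 1
  obtain ⟨e2a, e2b⟩ := key (-1)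
  obtain ⟨e3a, e3b⟩ := key 2
  obtain ⟨e4a, e4b⟩ := key (-2)
  have hsub : ∀ p q : V, R (p - q) = R p + (-1 : ℝ) • R q := fun p q => by
    rw [sub_eq_add_neg, map_add, ← neg_one_smul ℝ q, map_smul]
  have hneg : ∀ q : V, R (-q) = (-1 : ℝ) • R q := fun q => by
    rw [← neg_one_smul ℝ q, map_smul]
  simp only [hsub, hneg, map_add, map_sub, map_smul, LinearMap.add_apply, LinearMap.sub_apply,
    LinearMap.smul_apply, smul_eq_mul, zero_smul, one_smul, add_zero, zero_add,
    map_zero, LinearMap.zero_apply, zero_sub, map_neg, LinearMap.neg_apply] at e0a e0b e1a e1b e2a e2b e3a e3b e4a e4b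
  ring_nf at e0a e0b e1a e1b e2a e2b e3a e3b e4a e4b ⊢
  linarith [e0a, e0b, e1a, e1b, e2a, e2b, e3a, e3b, e4a, e4b,
    sym x (J x) (J x) x, sym x (J x) (J x) y, sym x (J x) (J y) x, sym x (J x) (J y) y,
    sym x (J y) (J x) x, sym x (J y) (J x) y, sym x (J y) (J y) x, sym x (J y) (J y) y,
    sym y (J x) (J x) x, sym y (J x) (J x) y, sym y (J x) (J y) x, sym y (J x) (J y) y,
    sym y (J y) (J x) x, sym y (J y) (J x) y, sym y (J y) (J y) x, sym y (J y) (J y) y]
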